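/- Fix N, n ≥ R ≥ 2 and a common level size s ≥ 2 (s i = s for all i), and fix normalized orthogonal codings. Suppose that no design with these parameters has strength R, and let D be a design with these parameters of strength R−1. Then GR(D) ≤ R + 1 − sqrt( r(s^R − r) / (N²(s − 1)) ), where r = N mod s^R, with equality if and only if D has weak strength R. -/

import Mathlib

open Finset Matrix

/-- A design `D` (rows = runs, coordinates = factors) has strength `t` if in every
projection onto `t` factors every level combination occurs equally often. -/
def hasStrength {N n : ℕ} (s : Fin n → ℕ) (D : Fin N → ∀ i, Fin (s i)) (t : ℕ) : Prop :=
  ∀ T : Finset (Fin n), T.card = t → ∀ x : ∀ i, Fin (s i),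
    (Finset.univ.filter fun r => ∀ i ∈ T, D r i = x i).card = N / ∏ i ∈ T, s i

/-- Normalized orthogonal coding: contrast columns have zero sum and
`Cᵀ C = m • 1` (squared length `m`, pairwise orthogonal). -/
def isNOC {m : ℕ} (C : Fin m → Fin (m - 1) → ℝ) : Prop :=
  (∀ j, ∑ l, C l j = 0) ∧
    ∀ j j', ∑ l, C l j * C l j' = if j = j' then (m : ℝ) else 0

/-- Column (indexed by the tuple `j`) of the interaction model matrix of the set `U`
of factors, evaluated at run `r`. -/
def intCol {N n : ℕ} {s : Fin n → ℕ} (C : ∀ i, Fin (s i) → Fin (s i - 1) → ℝ)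
    (D : Fin N → ∀ i, Fin (s i)) (U : Finset (Fin n))
    (j : ∀ i : U, Fin (s i.1 - 1)) (r : Fin N) : ℝ :=
  ∏ i : U, C i.1 (D r i.1) (j i)

/-- Projection frequency `a_k(U)`: sum of squared column sums of the interaction
model matrix of `U`, divided by `N²`. -/
noncomputable def projFreq {N n : ℕ} {s : Fin n → ℕ}
    (C : ∀ i, Fin (s i) → Fin (s i - 1) → ℝ)
    (D : Fin N → ∀ i, Fin (s i)) (U : Finset (Fin n)) : ℝ :=
  (∑ j : ∀ i : U, Fin (s i.1 - 1), (∑ r, intCol C D U j r) ^ 2) / (N : ℝ) ^ 2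

/-- Generalized resolution `GR = R + 1 - sqrt(max_U a_R(U)/(min_{i∈U} s i - 1))`,
the max running over all `R`-element sets of factors. -/
noncomputable def GR {N n : ℕ} {s : Fin n → ℕ} (R : ℕ)
    (C : ∀ i, Fin (s i) → Fin (s i - 1) → ℝ) (D : Fin N → ∀ i, Fin (s i)) : ℝ :=
  (R : ℝ) + 1 - Real.sqrt (sSup {v : ℝ | ∃ U : Finset (Fin n), U.card = R ∧
    v = projFreq C D U / (((sInf (s '' (U : Set (Fin n))) : ℕ) : ℝ) - 1)})

/-- Weak strength `t`: strength `t-1`, and in every projection onto `t` factors every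
level combination occurs `⌊N/∏ s i⌋` or `⌊N/∏ s i⌋ + 1` times. -/
def weakStrength {N n : ℕ} (s : Fin n → ℕ) (D : Fin N → ∀ i, Fin (s i)) (t : ℕ) : Prop :=
  hasStrength s D (t - 1) ∧
    ∀ U : Finset (Fin n), U.card = t → ∀ x : ∀ i, Fin (s i),
      (Finset.univ.filter fun r => ∀ i ∈ U, D r i = x i).card = N / ∏ i ∈ U, s i ∨
      (Finset.univ.filter fun r => ∀ i ∈ U, D r i = x i).card = N / ∏ i ∈ U, s i + 1

lemma noc_row {m : ℕ} (hm : 2 ≤ m) {C : Fin m → Fin (m-1) → ℝ} (hC : isNOC C) (a b : Fin m) :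
    ∑ j, C a j * C b j = (if a = b then (m:ℝ) else 0) - 1 := by
  obtain ⟨h1, h2⟩ := hC
  have hm0 : (m : ℝ) ≠ 0 := by positivity
  have e : (Unit ⊕ Fin (m-1)) ≃ Fin m := Fintype.equivOfCardEq (by simp; omega)
  set A : Matrix (Fin m) (Fin m) ℝ :=
    fun a k => Sum.elim (fun _ => (1:ℝ)) (fun j => C a j) (e.symm k) with hA
  have hAtA : Aᵀ * A = (m : ℝ) • 1 := by
    ext k k'
    simp only [Matrix.mul_apply, Matrix.transpose_apply, Matrix.smul_apply, Matrix.one_apply,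
      smul_eq_mul]
    simp only [hA]
    have hkk' : (k = k') ↔ (e.symm k = e.symm k') := e.symm.injective.eq_iff.symm
    rcases hu : e.symm k with u | j <;> rcases hu' : e.symm k' with u' | j' <;>
      simp only [Sum.elim_inl, Sum.elim_inr, one_mul, mul_one]
    · have : k = k' := by rw [hkk', hu, hu']
      simp [this, Finset.card_univ]
    · have : ¬ (k = k') := by rw [hkk', hu, hu']; simp
      simp [this, h1 j']
    · have : ¬ (k = k') := by rw [hkk', hu, hu']; simp
      simp [this, h1 j]
    · have : (k = k') ↔ (j = j') := by rw [hkk', hu, hu']; simp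
      rw [h2 j j']
      by_cases h : j = j' <;> simp [h, this]
  have hinv : ((m : ℝ)⁻¹ • Aᵀ) * A = 1 := by
    rw [Matrix.smul_mul, hAtA, smul_smul, inv_mul_cancel₀ hm0, one_smul]
  have hinv2 : A * ((m : ℝ)⁻¹ • Aᵀ) = 1 := mul_eq_one_comm.mp hinv
  have hAAt : A * Aᵀ = (m : ℝ) • 1 := by
    have := congrArg (fun M => (m:ℝ) • M) hinv2
    simpa [Matrix.mul_smul, smul_smul, mul_inv_cancel₀ hm0] using this
  have key : ∑ k, A a k * A b k = if a = b then (m:ℝ) else 0 := by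
    have := congrFun (congrFun hAAt a) b
    simpa [Matrix.mul_apply, Matrix.transpose_apply, Matrix.smul_apply, Matrix.one_apply] using this
  have expand : ∑ k, A a k * A b k = 1 + ∑ j, C a j * C b j := by
    have := Equiv.sum_comp e.symm
      (fun u => (Sum.elim (fun _ => (1:ℝ)) (fun j => C a j) u) *
        (Sum.elim (fun _ => (1:ℝ)) (fun j => C b j) u))
    rw [hA]
    rw [this]
    simp [Fintype.sum_sum_type]
  rw [expand] at key
  linarith

section Strength
variable {N n sl : ℕ}

/-- restriction map of a run to a set of factors -/
def resMap (D : Fin N → ∀ _ : Fin n, Fin sl) (T : Finset (Fin n)) (r : Fin N) :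
    ∀ _i : T, Fin sl := fun i => D r i.1

lemma count_pattern (hsl : 1 ≤ sl) (D : Fin N → ∀ _ : Fin n, Fin sl)
    (h : hasStrength (fun _ => sl) D t) (T : Finset (Fin n)) (hT : T.card = t)
    (z : ∀ _i : T, Fin sl) :
    (Finset.univ.filter fun r => resMap D T r = z).card = N / sl ^ t := by
  set x : ∀ _i : Fin n, Fin sl := fun i => if h : i ∈ T then z ⟨i, h⟩ else ⟨0, hsl⟩ with hx
  have heq : ∀ r : Fin N, (resMap D T r = z) ↔ (∀ i ∈ T, D r i = x i) := by
    intro r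
    constructor
    · intro hr i hi
      have := congrFun hr ⟨i, hi⟩
      simp only [resMap] at this
      simp [hx, hi, this]
    · intro hr
      funext i
      have := hr i.1 i.2
      simpa [resMap, hx, i.2] using this
  rw [Finset.filter_congr (fun r _ => heq r)]
  rw [h T hT x]
  simp [Finset.prod_const, hT]

lemma strength_dvd (hsl : 1 ≤ sl) {D : Fin N → ∀ _ : Fin n, Fin sl} {t : ℕ}
    (h : hasStrength (fun _ => sl) D t) (ht : t ≤ n) : sl ^ t ∣ N := by
  obtain ⟨T, _, hT⟩ := Finset.exists_superset_card_eq (s := (∅ : Finset (Fin n)))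
    (by simp) (by simpa using ht)
  have hN : N = ∑ z : (∀ _i : T, Fin sl),
      (Finset.univ.filter fun r => resMap D T r = z).card := by
    have := Finset.card_eq_sum_card_fiberwise
      (f := resMap D T) (s := (Finset.univ : Finset (Fin N))) (t := Finset.univ)
      (fun x _ => Finset.mem_univ _)
    simpa using this
  rw [Finset.sum_congr rfl (fun z _ => count_pattern hsl D h T hT z)] at hN
  simp only [Finset.sum_const, Finset.card_univ, smul_eq_mul] at hN
  rw [Fintype.card_pi] at hN
  simp only [Finset.prod_const, Finset.card_univ, Fintype.card_fin, Fintype.card_coe, hT] at hN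
  exact ⟨N / sl ^ t, hN⟩

lemma strength_mono (hsl : 1 ≤ sl) {D : Fin N → ∀ _ : Fin n, Fin sl} {t t' : ℕ}
    (h : hasStrength (fun _ => sl) D t) (ht : t ≤ n) (htt' : t' ≤ t) :
    hasStrength (fun _ => sl) D t' := by
  intro T' hT' x
  obtain ⟨T, hsub, hT⟩ := Finset.exists_superset_card_eq (s := T') (n := t)
    (by omega) (by simpa using ht)
  set V := T \ T' with hV
  have hcard : V.card = t - t' := by rw [hV, Finset.card_sdiff_of_subset hsub, hT, hT']
  -- fiberwise decomposition over patterns on V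
  have key : (Finset.univ.filter fun r => ∀ i ∈ T', D r i = x i).card
      = ∑ z : (∀ _i : V, Fin sl),
        ((Finset.univ.filter fun r => ∀ i ∈ T', D r i = x i).filter
          fun r => resMap D V r = z).card :=
    Finset.card_eq_sum_card_fiberwise (fun x _ => Finset.mem_univ _)
  have step : ∀ z : (∀ _i : V, Fin sl),
      ((Finset.univ.filter fun r => ∀ i ∈ T', D r i = x i).filter
        fun r => resMap D V r = z).card = N / sl ^ t := by
    intro z
    rw [Finset.filter_filter]
    set y : ∀ _i : Fin n, Fin sl := fun i => if hi : i ∈ T' then x i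
      else if hi2 : i ∈ V then z ⟨i, hi2⟩ else ⟨0, hsl⟩ with hy
    have heq : ∀ r : Fin N,
        ((∀ i ∈ T', D r i = x i) ∧ resMap D V r = z) ↔ (∀ i ∈ T, D r i = y i) := by
      intro r
      constructor
      · rintro ⟨h1, h2⟩ i hi
        by_cases hi' : i ∈ T'
        · simp [hy, hi', h1 i hi']
        · have hiV : i ∈ V := by rw [hV]; exact Finset.mem_sdiff.mpr ⟨hi, hi'⟩
          have := congrFun h2 ⟨i, hiV⟩
          simp only [resMap] at this
          simp [hy, hi', hiV, this]
      · intro hr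
        constructor
        · intro i hi
          have := hr i (hsub hi)
          simpa [hy, hi] using this
        · funext i
          have hiT : i.1 ∈ T := (Finset.sdiff_subset) i.2
          have hiT' : i.1 ∉ T' := (Finset.mem_sdiff.mp i.2).2
          have := hr i.1 hiT
          simpa [resMap, hy, hiT', i.2] using this
    rw [Finset.filter_congr (fun r _ => heq r)]
    rw [h T hT y]
    simp [Finset.prod_const, hT]
  rw [key, Finset.sum_congr rfl (fun z _ => step z)]
  simp only [Finset.sum_const, Finset.card_univ, smul_eq_mul]
  rw [Fintype.card_pi]
  simp only [Finset.prod_const, Finset.card_univ, Fintype.card_coe, hcard,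
    Fintype.card_fin, hT']
  obtain ⟨k, hk⟩ := strength_dvd hsl h ht
  subst hk
  have h1 : 0 < sl ^ t' := Nat.pow_pos hsl
  have h2 : 0 < sl ^ t := Nat.pow_pos hsl
  rw [Nat.mul_div_cancel_left _ h2]
  have : sl ^ t = sl ^ t' * sl ^ (t - t') := by
    rw [← pow_add]; congr 1; omega
  rw [this, mul_assoc, Nat.mul_div_cancel_left _ h1, mul_comm]
end Strength

lemma key_identity {N n R sl : ℕ} (hN : 1 ≤ N) (hR : 2 ≤ R) (hn : R ≤ n) (hsl : 2 ≤ sl)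
    (C : ∀ i : Fin n, Fin sl → Fin (sl - 1) → ℝ) (hC : ∀ i, isNOC (C i))
    (D : Fin N → ∀ _ : Fin n, Fin sl) (hD : hasStrength (fun _ => sl) D (R-1))
    (U : Finset (Fin n)) (hU : U.card = R) :
    (N:ℝ)^2 * projFreq (s := fun _ => sl) C D U
      = (sl:ℝ)^R * (∑ z : (∀ _i : U, Fin sl),
          ((Finset.univ.filter fun r => resMap D U r = z).card : ℝ)^2) - (N:ℝ)^2 := by
  have hN0 : (0:ℝ) < (N:ℝ) := by positivity
  have hcardU : Fintype.card U = R := by rw [Fintype.card_coe, hU]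
  rw [projFreq, mul_div_cancel₀ _ (by positivity)]
  have step1 : (∑ j : ∀ i : U, Fin ((fun _ : Fin n => sl) i.1 - 1),
        (∑ r, intCol (s := fun _ => sl) C D U j r) ^ 2)
      = ∑ r : Fin N, ∑ r' : Fin N,
          ∏ i : U, ((if D r i.1 = D r' i.1 then (sl:ℝ) else 0) - 1) := by
    calc (∑ j : ∀ i : U, Fin ((fun _ : Fin n => sl) i.1 - 1),
          (∑ r, intCol (s := fun _ => sl) C D U j r) ^ 2)
        = ∑ j : ∀ i : U, Fin (sl - 1), ∑ r : Fin N, ∑ r' : Fin N,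
            intCol (s := fun _ => sl) C D U j r * intCol (s := fun _ => sl) C D U j r' := by
          exact Finset.sum_congr rfl fun j _ => by rw [pow_two, Finset.sum_mul_sum]
      _ = ∑ r : Fin N, ∑ r' : Fin N, ∑ j : ∀ i : U, Fin (sl - 1),
            intCol (s := fun _ => sl) C D U j r * intCol (s := fun _ => sl) C D U j r' := by
          rw [Finset.sum_comm]
          exact Finset.sum_congr rfl fun r _ => Finset.sum_comm
      _ = ∑ r : Fin N, ∑ r' : Fin N,
            ∏ i : U, ((if D r i.1 = D r' i.1 then (sl:ℝ) else 0) - 1) := by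
          refine Finset.sum_congr rfl fun r _ => Finset.sum_congr rfl fun r' _ => ?_
          have merge : ∀ j : ∀ i : U, Fin (sl - 1),
              intCol (s := fun _ => sl) C D U j r * intCol (s := fun _ => sl) C D U j r'
                = ∏ i : U, (C i.1 (D r i.1) (j i) * C i.1 (D r' i.1) (j i)) := fun j => by
            rw [intCol, intCol, ← Finset.prod_mul_distrib]
          rw [Finset.sum_congr rfl fun j _ => merge j, ← Fintype.piFinset_univ]
          refine Eq.trans (Finset.prod_univ_sum (fun _ => Finset.univ)
            (fun (i : U) v => C i.1 (D r i.1) v * C i.1 (D r' i.1) v)).symm ?_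
          exact Finset.prod_congr rfl fun i _ => noc_row hsl (hC i.1) _ _
  rw [step1]
  -- expand the product over subsets
  have step2 : ∀ r r' : Fin N,
      (∏ i : U, ((if D r i.1 = D r' i.1 then (sl:ℝ) else 0) - 1))
        = ∑ T ∈ (Finset.univ : Finset U).powerset,
            ((sl:ℝ)^T.card * (if ∀ i ∈ T, D r i.1 = D r' i.1 then (1:ℝ) else 0))
              * (-1:ℝ)^(R - T.card) := by
    intro r r'
    have : (∏ i : U, ((if D r i.1 = D r' i.1 then (sl:ℝ) else 0) - 1))
        = ∏ i : U, ((if D r i.1 = D r' i.1 then (sl:ℝ) else 0) + (-1)) := by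
      simp [sub_eq_add_neg]
    rw [this, Finset.prod_add]
    refine Finset.sum_congr rfl fun T hT => ?_
    have h1 : (∏ i ∈ T, (if D r i.1 = D r' i.1 then (sl:ℝ) else 0))
        = (sl:ℝ)^T.card * (if ∀ i ∈ T, D r i.1 = D r' i.1 then (1:ℝ) else 0) := by
      have : ∀ i ∈ T, (if D r i.1 = D r' i.1 then (sl:ℝ) else 0)
          = (sl:ℝ) * (if D r i.1 = D r' i.1 then (1:ℝ) else 0) := by
        intro i _; by_cases h : D r i.1 = D r' i.1 <;> simp [h]
      rw [Finset.prod_congr rfl this, Finset.prod_mul_distrib, Finset.prod_const,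
        Finset.prod_boole]
      convert rfl
    have h2 : (∏ _i ∈ (Finset.univ : Finset U) \ T, (-1:ℝ)) = (-1:ℝ)^(R - T.card) := by
      rw [Finset.prod_const, Finset.card_sdiff_of_subset (Finset.subset_univ T)]
      congr 1
      rw [Finset.card_univ, hcardU]
    rw [h1, h2]
  rw [Finset.sum_congr rfl fun r _ => Finset.sum_congr rfl fun r' _ => step2 r r']
  -- pull the subset sum outside
  rw [(Finset.sum_congr rfl fun r (_ : r ∈ Finset.univ) =>
    (Finset.sum_comm (s := (Finset.univ : Finset (Fin N)))
      (t := (Finset.univ : Finset U).powerset)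
      (f := fun r' T => ((sl:ℝ)^T.card
        * (if ∀ i ∈ T, D r i.1 = D r' i.1 then (1:ℝ) else 0)) * (-1:ℝ)^(R - T.card)) :
      _ = _)), Finset.sum_comm]
  -- now  ∑ T ∈ powerset, ∑ r, ∑ r', ...
  set cnt : (∀ _i : U, Fin sl) → ℕ :=
    fun z => (Finset.univ.filter fun r => resMap D U r = z).card with hcnt
  have hdvdR1 : sl ^ (R - 1) ∣ N := strength_dvd (by omega) hD (by omega)
  -- off-diagonal terms
  have inner : ∀ T ∈ ((Finset.univ : Finset U).powerset).erase Finset.univ,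
      (∑ r : Fin N, ∑ r' : Fin N,
        ((sl:ℝ)^T.card * (if ∀ i ∈ T, D r i.1 = D r' i.1 then (1:ℝ) else 0))
          * (-1:ℝ)^(R - T.card)) = (-1:ℝ)^(R - T.card) * (N:ℝ)^2 := by
    intro T hT
    obtain ⟨hTne, hTss⟩ := Finset.mem_erase.mp hT
    have hTlt : T.card < R := by
      rw [← hcardU, ← Finset.card_univ]
      exact Finset.card_lt_card (lt_of_le_of_ne (Finset.mem_powerset.mp hTss) hTne)
    set V : Finset (Fin n) := T.image Subtype.val with hV
    have hVcard : V.card = T.card :=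
      Finset.card_image_of_injective _ Subtype.val_injective
    have hstr : hasStrength (fun _ => sl) D V.card :=
      strength_mono (by omega) hD (by omega) (by omega)
    have hdvd : sl ^ V.card ∣ N :=
      dvd_trans (pow_dvd_pow sl (by omega)) hdvdR1
    have hcond : ∀ r r' : Fin N,
        (∀ i ∈ T, D r i.1 = D r' i.1) ↔ (∀ i ∈ V, D r' i = D r i) := by
      intro r r'
      constructor
      · intro h i hi
        obtain ⟨a, ha, rfl⟩ := Finset.mem_image.mp hi
        exact (h a ha).symm
      · intro h i hi
        exact (h i.1 (Finset.mem_image.mpr ⟨i, hi, rfl⟩)).symm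
    have hcount : ∀ r : Fin N,
        (∑ r' : Fin N, (if ∀ i ∈ T, D r i.1 = D r' i.1 then (1:ℝ) else 0))
          = ((N / sl ^ T.card : ℕ) : ℝ) := by
      intro r
      rw [Finset.sum_congr rfl fun r' _ =>
        if_congr (hcond r r') rfl rfl]
      rw [Finset.sum_boole]
      rw [hstr V rfl (D r)]
      congr 2
      rw [Finset.prod_const, hVcard]
    have hcast : (sl:ℝ)^T.card * ((N / sl ^ T.card : ℕ) : ℝ) = (N:ℝ) := by
      have hd2 : sl ^ T.card ∣ N := dvd_trans (pow_dvd_pow sl (by omega)) hdvdR1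
      have := Nat.div_mul_cancel hd2
      calc (sl:ℝ)^T.card * ((N / sl ^ T.card : ℕ) : ℝ)
          = (((N / sl ^ T.card) * sl ^ T.card : ℕ) : ℝ) := by push_cast; ring
        _ = (N:ℝ) := by rw [this]
    calc (∑ r : Fin N, ∑ r' : Fin N,
          ((sl:ℝ)^T.card * (if ∀ i ∈ T, D r i.1 = D r' i.1 then (1:ℝ) else 0))
            * (-1:ℝ)^(R - T.card))
        = ∑ r : Fin N, ((sl:ℝ)^T.card
            * (∑ r' : Fin N, (if ∀ i ∈ T, D r i.1 = D r' i.1 then (1:ℝ) else 0)))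
            * (-1:ℝ)^(R - T.card) := by
          refine Finset.sum_congr rfl fun r _ => ?_
          rw [Finset.mul_sum, Finset.sum_mul]
      _ = ∑ _r : Fin N, ((sl:ℝ)^T.card * ((N / sl ^ T.card : ℕ) : ℝ)) * (-1:ℝ)^(R - T.card) := by
          exact Finset.sum_congr rfl fun r _ => by rw [hcount r]
      _ = (N:ℝ) * ((N:ℝ) * (-1:ℝ)^(R - T.card)) := by
          rw [Finset.sum_const, Finset.card_univ, Fintype.card_fin, hcast]
          simp [nsmul_eq_mul]
      _ = (-1:ℝ)^(R - T.card) * (N:ℝ)^2 := by ring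
  -- diagonal term
  have diag : (∑ r : Fin N, ∑ r' : Fin N,
        ((sl:ℝ)^(Finset.univ : Finset U).card
          * (if ∀ i ∈ (Finset.univ : Finset U), D r i.1 = D r' i.1 then (1:ℝ) else 0))
          * (-1:ℝ)^(R - (Finset.univ : Finset U).card))
      = (sl:ℝ)^R * ∑ z : (∀ _i : U, Fin sl), ((cnt z : ℕ) : ℝ)^2 := by
    have hcu : (Finset.univ : Finset U).card = R := by rw [Finset.card_univ, hcardU]
    have hcond : ∀ r r' : Fin N,
        (∀ i ∈ (Finset.univ : Finset U), D r i.1 = D r' i.1) ↔ resMap D U r' = resMap D U r := by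
      intro r r'
      constructor
      · intro h; funext i; exact (h i (Finset.mem_univ i)).symm
      · intro h i _; exact (congrFun h i).symm
    have hcount : ∀ r : Fin N,
        (∑ r' : Fin N, (if ∀ i ∈ (Finset.univ : Finset U), D r i.1 = D r' i.1 then (1:ℝ) else 0))
          = ((cnt (resMap D U r) : ℕ) : ℝ) := by
      intro r
      rw [Finset.sum_congr rfl fun r' _ => if_congr (hcond r r') rfl rfl]
      rw [Finset.sum_boole]
    have fiber : (∑ r : Fin N, ((cnt (resMap D U r) : ℕ) : ℝ))
        = ∑ z : (∀ _i : U, Fin sl), ((cnt z : ℕ) : ℝ)^2 := by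
      rw [← Finset.sum_fiberwise (Finset.univ : Finset (Fin N)) (resMap D U)
        (fun r => ((cnt (resMap D U r) : ℕ) : ℝ))]
      refine Finset.sum_congr rfl fun z _ => ?_
      have : ∀ r ∈ Finset.univ.filter (fun r => resMap D U r = z),
          ((cnt (resMap D U r) : ℕ) : ℝ) = ((cnt z : ℕ) : ℝ) := by
        intro r hr
        rw [(Finset.mem_filter.mp hr).2]
      rw [Finset.sum_congr rfl this, Finset.sum_const, nsmul_eq_mul]
      rw [hcnt]
      ring
    calc (∑ r : Fin N, ∑ r' : Fin N,
          ((sl:ℝ)^(Finset.univ : Finset U).card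
            * (if ∀ i ∈ (Finset.univ : Finset U), D r i.1 = D r' i.1 then (1:ℝ) else 0))
            * (-1:ℝ)^(R - (Finset.univ : Finset U).card))
        = ∑ r : Fin N, (sl:ℝ)^R * ((cnt (resMap D U r) : ℕ) : ℝ) := by
          refine Finset.sum_congr rfl fun r _ => ?_
          rw [show (∑ r' : Fin N,
            ((sl:ℝ)^(Finset.univ : Finset U).card
              * (if ∀ i ∈ (Finset.univ : Finset U), D r i.1 = D r' i.1 then (1:ℝ) else 0))
              * (-1:ℝ)^(R - (Finset.univ : Finset U).card))
            = ((sl:ℝ)^(Finset.univ : Finset U).card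
              * (∑ r' : Fin N, (if ∀ i ∈ (Finset.univ : Finset U), D r i.1 = D r' i.1 then (1:ℝ) else 0)))
              * (-1:ℝ)^(R - (Finset.univ : Finset U).card) from by
                rw [Finset.mul_sum, Finset.sum_mul]]
          rw [hcount r, hcu]
          simp
      _ = (sl:ℝ)^R * ∑ z : (∀ _i : U, Fin sl), ((cnt z : ℕ) : ℝ)^2 := by
          rw [← Finset.mul_sum, fiber]
  -- alternating sum over proper subsets
  have alt : (∑ T ∈ ((Finset.univ : Finset U).powerset).erase Finset.univ,
      (-1:ℝ)^(R - T.card)) = -1 := by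
    have h0 : (∑ T ∈ (Finset.univ : Finset U).powerset, (-1:ℝ)^(R - T.card)) = 0 := by
      have hc : ∀ T ∈ (Finset.univ : Finset U).powerset,
          (-1:ℝ)^(R - T.card) = (-1:ℝ)^R * (-1:ℝ)^(T.card) := by
        intro T hT
        have hk : T.card ≤ R := by
          rw [← hcardU, ← Finset.card_univ]
          exact Finset.card_le_card (Finset.mem_powerset.mp hT)
        have h2 : (-1:ℝ)^(R - T.card) * ((-1:ℝ)^2)^(T.card) = (-1:ℝ)^R * (-1:ℝ)^T.card := by
          rw [← pow_mul, ← pow_add, ← pow_add]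
          congr 1
          omega
        simpa using h2
      have hne : (Finset.univ : Finset U) ≠ ∅ := by
        intro h
        have h' : (Finset.univ : Finset U).card = 0 := by rw [h]; rfl
        rw [Finset.card_univ, hcardU] at h'
        omega
      have hz : (∑ m ∈ (Finset.univ : Finset U).powerset, (-1:ℝ)^m.card) = 0 := by
        have hzi := Finset.sum_powerset_neg_one_pow_card (α := U) (x := Finset.univ)
        rw [if_neg hne] at hzi
        have h2 : (∑ m ∈ (Finset.univ : Finset U).powerset, (-1:ℝ)^m.card)
            = ((∑ m ∈ (Finset.univ : Finset U).powerset, (-1:ℤ)^m.card : ℤ) : ℝ) := by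
          push_cast
          rfl
        rw [h2, hzi]
        norm_num
      rw [Finset.sum_congr rfl hc, ← Finset.mul_sum]
      rw [hz, mul_zero]
    have hsplit : (∑ T ∈ ((Finset.univ : Finset U).powerset).erase Finset.univ,
        (-1:ℝ)^(R - T.card)) + (-1:ℝ)^(R - (Finset.univ : Finset U).card)
        = ∑ T ∈ (Finset.univ : Finset U).powerset, (-1:ℝ)^(R - T.card) :=
      Finset.sum_erase_add ((Finset.univ : Finset U).powerset)
        (fun T => (-1:ℝ)^(R - T.card)) (Finset.mem_powerset_self _)
    rw [h0] at hsplit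
    have huv : (-1:ℝ)^(R - (Finset.univ : Finset U).card) = 1 := by
      rw [Finset.card_univ, hcardU]
      simp
    rw [huv] at hsplit
    linarith
  have hfin : (∑ T ∈ ((Finset.univ : Finset U).powerset).erase Finset.univ,
      ∑ r : Fin N, ∑ r' : Fin N,
        ((sl:ℝ)^T.card * (if ∀ i ∈ T, D r i.1 = D r' i.1 then (1:ℝ) else 0))
          * (-1:ℝ)^(R - T.card))
      + (∑ r : Fin N, ∑ r' : Fin N,
        ((sl:ℝ)^(Finset.univ : Finset U).card
          * (if ∀ i ∈ (Finset.univ : Finset U), D r i.1 = D r' i.1 then (1:ℝ) else 0))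
          * (-1:ℝ)^(R - (Finset.univ : Finset U).card))
      = ∑ T ∈ (Finset.univ : Finset U).powerset, ∑ r : Fin N, ∑ r' : Fin N,
        ((sl:ℝ)^T.card * (if ∀ i ∈ T, D r i.1 = D r' i.1 then (1:ℝ) else 0))
          * (-1:ℝ)^(R - T.card) :=
    Finset.sum_erase_add _ _ (Finset.mem_powerset_self _)
  rw [← hfin, Finset.sum_congr rfl inner, diag, ← Finset.sum_mul, alt]
  ring

lemma sq_sum_bound {ι : Type*} [Fintype ι] (c : ι → ℕ) (m q r : ℕ)
    (hm : Fintype.card ι = m) (hsum : ∑ i, c i = m * q + r) :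
    ((m * q^2 + (2*q+1)*r : ℕ) : ℤ) ≤ ∑ i, (c i : ℤ)^2 ∧
      ((∑ i, (c i : ℤ)^2) = ((m * q^2 + (2*q+1)*r : ℕ) : ℤ) ↔
        ∀ i, c i = q ∨ c i = q + 1) := by
  set f : ι → ℤ := fun i => ((c i : ℤ) - q) * ((c i : ℤ) - q - 1) with hf
  have hs : (∑ i, (c i : ℤ)) = (m : ℤ) * q + r := by exact_mod_cast hsum
  have hexp : ∑ i, f i = (∑ i, (c i : ℤ)^2) - ((m * q^2 + (2*q+1)*r : ℕ) : ℤ) := by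
    have h1 : ∀ i, f i = (c i : ℤ)^2 - (2*(q:ℤ)+1)*(c i : ℤ) + ((q:ℤ)^2+q) := fun i => by
      rw [hf]; ring
    rw [Finset.sum_congr rfl fun i _ => h1 i]
    rw [Finset.sum_add_distrib, Finset.sum_sub_distrib, ← Finset.mul_sum, hs,
      Finset.sum_const, Finset.card_univ, hm]
    push_cast
    ring
  have hnn : ∀ i, 0 ≤ f i := by
    intro i
    have h1 : f i = ((c i : ℤ) - q) * ((c i : ℤ) - q - 1) := rfl
    rw [h1]
    rcases le_or_gt ((c i : ℤ)) q with h | h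
    · nlinarith
    · have h' : (q : ℤ) + 1 ≤ c i := h
      nlinarith
  have hsumnn : 0 ≤ ∑ i, f i := Finset.sum_nonneg fun i _ => hnn i
  constructor
  · linarith [hexp]
  · constructor
    · intro heq
      have hz : ∑ i, f i = 0 := by rw [hexp, heq]; ring
      have := (Finset.sum_eq_zero_iff_of_nonneg (fun i _ => hnn i)).mp hz
      intro i
      have hi := this i (Finset.mem_univ i)
      have h1 : f i = ((c i : ℤ) - q) * ((c i : ℤ) - q - 1) := rfl
      rw [h1] at hi
      rcases mul_eq_zero.mp hi with h | h
      · left; omega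
      · right; omega
    · intro hall
      have hz : ∑ i, f i = 0 := by
        refine Finset.sum_eq_zero fun i _ => ?_
        rw [hf]
        show ((c i : ℤ) - q) * ((c i : ℤ) - q - 1) = 0
        rcases hall i with h | h <;> rw [h] <;> push_cast <;> ring
      linarith [hexp, hz]

lemma perU {N n R sl : ℕ} (hN : 1 ≤ N) (hR : 2 ≤ R) (hn : R ≤ n) (hsl : 2 ≤ sl)
    (C : ∀ i : Fin n, Fin sl → Fin (sl - 1) → ℝ) (hC : ∀ i, isNOC (C i))
    (D : Fin N → ∀ _ : Fin n, Fin sl) (hD : hasStrength (fun _ => sl) D (R-1))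
    (U : Finset (Fin n)) (hU : U.card = R) :
    (((N % sl ^ R) * (sl ^ R - N % sl ^ R) : ℕ) : ℝ)
        ≤ (N:ℝ)^2 * projFreq (s := fun _ => sl) C D U ∧
      ((N:ℝ)^2 * projFreq (s := fun _ => sl) C D U
          = (((N % sl ^ R) * (sl ^ R - N % sl ^ R) : ℕ) : ℝ) ↔
        ∀ z : (∀ _i : U, Fin sl),
          (Finset.univ.filter fun r => resMap D U r = z).card = N / sl ^ R ∨
          (Finset.univ.filter fun r => resMap D U r = z).card = N / sl ^ R + 1) := by
  set m := sl ^ R with hmdef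
  set q := N / sl ^ R with hqdef
  set r := N % sl ^ R with hrdef
  have hm0 : 0 < m := Nat.pow_pos (by omega)
  have hrm : r < m := Nat.mod_lt _ hm0
  set c : (∀ _i : U, Fin sl) → ℕ :=
    fun z => (Finset.univ.filter fun rr => resMap D U rr = z).card with hc
  have hcard : Fintype.card (∀ _i : U, Fin sl) = m := by
    rw [Fintype.card_pi]
    simp [Finset.prod_const, Fintype.card_coe, hU, hmdef]
  have hsum : ∑ z, c z = N := by
    have h := Finset.card_eq_sum_card_fiberwise
      (f := resMap D U) (s := (Finset.univ : Finset (Fin N))) (t := Finset.univ)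
      (fun x _ => Finset.mem_univ _)
    simpa using h.symm
  have hNmq : N = m * q + r := (Nat.div_add_mod N (sl ^ R)).symm
  obtain ⟨hle, hiff⟩ := sq_sum_bound c m q r hcard (by rw [hsum]; exact hNmq)
  set Sz : ℤ := ∑ z, (c z : ℤ)^2 with hSz
  have hkey := key_identity hN hR hn hsl C hC D hD U hU
  have hkey2 : (N:ℝ)^2 * projFreq (s := fun _ => sl) C D U
      = (((m : ℤ) * Sz - (N:ℤ)^2 : ℤ) : ℝ) := by
    rw [hkey]
    push_cast [hSz, hmdef]
    ring
  have hNint : (N:ℤ) = (m:ℤ) * q + r := by exact_mod_cast hNmq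
  have hfact : (m:ℤ) * Sz - (N:ℤ)^2 - ((r * (m - r) : ℕ) : ℤ)
      = (m:ℤ) * (Sz - ((m * q^2 + (2*q+1)*r : ℕ) : ℤ)) := by
    push_cast [Nat.cast_sub hrm.le]
    rw [hNint]
    ring
  have hA : 0 ≤ Sz - ((m * q^2 + (2*q+1)*r : ℕ) : ℤ) := by omega
  constructor
  · rw [hkey2]
    have : ((r * (m - r) : ℕ) : ℤ) ≤ (m:ℤ) * Sz - (N:ℤ)^2 := by
      have h2 : 0 ≤ (m:ℤ) * (Sz - ((m * q^2 + (2*q+1)*r : ℕ) : ℤ)) :=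
        mul_nonneg (by positivity) hA
      omega
    exact_mod_cast this
  · rw [hkey2]
    have hcast : ((N:ℝ)^2 * projFreq (s := fun _ => sl) C D U = _) := hkey2
    constructor
    · intro h
      have hz : ((m : ℤ) * Sz - (N:ℤ)^2 : ℤ) = ((r * (m - r) : ℕ) : ℤ) := by
        exact_mod_cast h
      have : (m:ℤ) * (Sz - ((m * q^2 + (2*q+1)*r : ℕ) : ℤ)) = 0 := by omega
      have hz2 : Sz = ((m * q^2 + (2*q+1)*r : ℕ) : ℤ) := by
        have hm0' : (m:ℤ) ≠ 0 := by exact_mod_cast hm0.ne'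
        have := mul_eq_zero.mp this
        rcases this with h' | h'
        · exact absurd h' hm0'
        · omega
      exact hiff.mp hz2
    · intro h
      have hz2 : Sz = ((m * q^2 + (2*q+1)*r : ℕ) : ℤ) := hiff.mpr h
      have : ((m : ℤ) * Sz - (N:ℤ)^2 : ℤ) = ((r * (m - r) : ℕ) : ℤ) := by
        rw [hz2]
        have := hfact
        rw [hz2] at this
        omega
      exact_mod_cast this

/-- for symmetric `s`-level designs, if no strength `R` design with these
parameters exists, then
`GR(D) ≤ R + 1 - sqrt(r(s^R - r)/(N²(s - 1)))` with `r = N mod s^R`, and equality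
holds iff `D` has weak strength `R`. -/
theorem statement10 {N n R sl : ℕ} (hN : 1 ≤ N) (hR : 2 ≤ R) (hn : R ≤ n) (hsl : 2 ≤ sl)
    (C : ∀ i : Fin n, Fin sl → Fin (sl - 1) → ℝ) (hC : ∀ i, isNOC (C i))
    (hnoR : ∀ D : Fin N → ∀ _ : Fin n, Fin sl, ¬ hasStrength (fun _ => sl) D R)
    (D : Fin N → ∀ _ : Fin n, Fin sl) (hD : hasStrength (fun _ => sl) D (R - 1)) :
    GR (s := fun _ => sl) R C D ≤
        (R : ℝ) + 1 - Real.sqrt (((N % sl ^ R : ℕ) : ℝ) * ((sl : ℝ) ^ R - ((N % sl ^ R : ℕ) : ℝ)) /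
          ((N : ℝ) ^ 2 * ((sl : ℝ) - 1))) ∧
      (GR (s := fun _ => sl) R C D =
          (R : ℝ) + 1 - Real.sqrt (((N % sl ^ R : ℕ) : ℝ) * ((sl : ℝ) ^ R - ((N % sl ^ R : ℕ) : ℝ)) /
            ((N : ℝ) ^ 2 * ((sl : ℝ) - 1))) ↔
        weakStrength (fun _ => sl) D R) := by
  have hsl1 : (1:ℝ) < (sl:ℝ) := by exact_mod_cast hsl
  have hslpos : (0:ℝ) < (sl:ℝ) - 1 := by linarith
  have hN0 : (0:ℝ) < (N:ℝ) := by exact_mod_cast hN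
  have hrm : N % sl ^ R < sl ^ R := Nat.mod_lt _ (Nat.pow_pos (by omega))
  set b0 : ℝ := (((N % sl ^ R) * (sl ^ R - N % sl ^ R) : ℕ) : ℝ) with hb0
  set B : ℝ := b0 / ((N:ℝ)^2 * ((sl:ℝ) - 1)) with hB
  have hBeq : ((N % sl ^ R : ℕ) : ℝ) * ((sl : ℝ) ^ R - ((N % sl ^ R : ℕ) : ℝ)) /
      ((N : ℝ) ^ 2 * ((sl : ℝ) - 1)) = B := by
    rw [hB, hb0]
    push_cast [Nat.cast_sub hrm.le]
    ring
  set S : Set ℝ := {v : ℝ | ∃ U : Finset (Fin n), U.card = R ∧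
    v = projFreq (s := fun _ => sl) C D U /
      (((sInf ((fun _ : Fin n => sl) '' (U : Set (Fin n))) : ℕ) : ℝ) - 1)} with hS
  have hGR : GR (s := fun _ => sl) R C D = (R:ℝ) + 1 - Real.sqrt (sSup S) := rfl
  have hsinf : ∀ U : Finset (Fin n), U.card = R →
      ((sInf ((fun _ : Fin n => sl) '' (U : Set (Fin n))) : ℕ) : ℝ) = (sl:ℝ) := by
    intro U hU
    have hne : (U : Set (Fin n)).Nonempty := by
      rw [Finset.coe_nonempty]
      exact Finset.card_pos.mp (by omega)
    rw [Set.Nonempty.image_const hne sl, csInf_singleton]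
  have hmem : ∀ U : Finset (Fin n), U.card = R →
      projFreq (s := fun _ => sl) C D U / ((sl:ℝ) - 1) ∈ S := by
    intro U hU
    exact ⟨U, hU, by rw [hsinf U hU]⟩
  have hSfin : S.Finite := by
    have hsub : S ⊆ Set.range (fun U : Finset (Fin n) =>
        projFreq (s := fun _ => sl) C D U /
          (((sInf ((fun _ : Fin n => sl) '' (U : Set (Fin n))) : ℕ) : ℝ) - 1)) := by
      rintro v ⟨U, _, rfl⟩
      exact ⟨U, rfl⟩
    exact (Set.finite_range _).subset hsub
  obtain ⟨U₀, _, hU₀⟩ := Finset.exists_superset_card_eq (s := (∅ : Finset (Fin n)))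
    (by simp) (by simpa using hn)
  have hSne : S.Nonempty := ⟨_, hmem U₀ hU₀⟩
  have hbdd : BddAbove S := hSfin.bddAbove
  -- comparison of values with B
  have hval : ∀ U : Finset (Fin n), U.card = R →
      projFreq (s := fun _ => sl) C D U / ((sl:ℝ) - 1)
        = ((N:ℝ)^2 * projFreq (s := fun _ => sl) C D U) / ((N:ℝ)^2 * ((sl:ℝ) - 1)) := by
    intro U _
    rw [mul_div_mul_left _ _ (by positivity)]
  have hvB : ∀ U : Finset (Fin n), U.card = R →
      B ≤ projFreq (s := fun _ => sl) C D U / ((sl:ℝ) - 1) := by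
    intro U hU
    rw [hval U hU, hB]
    exact (div_le_div_iff_of_pos_right (by positivity)).mpr
      (perU hN hR hn hsl C hC D hD U hU).1
  have hvBiff : ∀ U : Finset (Fin n), U.card = R →
      (projFreq (s := fun _ => sl) C D U / ((sl:ℝ) - 1) = B ↔
        (N:ℝ)^2 * projFreq (s := fun _ => sl) C D U = b0) := by
    intro U hU
    rw [hval U hU, hB]
    constructor
    · intro h
      have := (div_eq_div_iff (by positivity : ((N:ℝ)^2 * ((sl:ℝ)-1)) ≠ 0)
        (by positivity : ((N:ℝ)^2 * ((sl:ℝ)-1)) ≠ 0)).mp h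
      exact mul_right_cancel₀ (by positivity) this
    · intro h
      rw [h]
  have hBle : B ≤ sSup S :=
    le_trans (hvB U₀ hU₀) (le_csSup hbdd (hmem U₀ hU₀))
  have hB0 : 0 ≤ B := by
    rw [hB, hb0]
    positivity
  have hsup0 : 0 ≤ sSup S := le_trans hB0 hBle
  -- bridge between z-counts and full-pattern counts
  have hbridge : ∀ U : Finset (Fin n), U.card = R →
      ((∀ z : (∀ _i : U, Fin sl),
          (Finset.univ.filter fun r => resMap D U r = z).card = N / sl ^ R ∨
          (Finset.univ.filter fun r => resMap D U r = z).card = N / sl ^ R + 1) ↔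
        (∀ x : ∀ _ : Fin n, Fin sl,
          (Finset.univ.filter fun r => ∀ i ∈ U, D r i = x i).card
            = N / ∏ i ∈ U, (fun _ : Fin n => sl) i ∨
          (Finset.univ.filter fun r => ∀ i ∈ U, D r i = x i).card
            = N / ∏ i ∈ U, (fun _ : Fin n => sl) i + 1)) := by
    intro U hU
    have hprod : (∏ i ∈ U, (fun _ : Fin n => sl) i) = sl ^ R := by
      rw [Finset.prod_const, hU]
    have hfilter : ∀ x : ∀ _ : Fin n, Fin sl,
        (Finset.univ.filter fun r => ∀ i ∈ U, D r i = x i)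
          = (Finset.univ.filter fun r => resMap D U r = fun i : U => x i.1) := by
      intro x
      refine Finset.filter_congr fun r _ => ?_
      constructor
      · intro h
        funext i
        exact h i.1 i.2
      · intro h i hi
        exact congrFun h ⟨i, hi⟩
    constructor
    · intro h x
      rw [hfilter x, hprod]
      exact h _
    · intro h z
      set x : ∀ _ : Fin n, Fin sl :=
        fun i => if hi : i ∈ U then z ⟨i, hi⟩ else ⟨0, by omega⟩ with hx
      have hzx : (fun i : U => x i.1) = z := by
        funext i
        simp [hx, i.2]
      have := h x
      rw [hfilter x, hzx, hprod] at this
      exact this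
  -- characterization of sSup = B
  have hchar : sSup S = B ↔ weakStrength (fun _ => sl) D R := by
    constructor
    · intro hsb
      refine ⟨hD, fun U hU => ?_⟩
      have hle : projFreq (s := fun _ => sl) C D U / ((sl:ℝ) - 1) ≤ B :=
        hsb ▸ le_csSup hbdd (hmem U hU)
      have heq : projFreq (s := fun _ => sl) C D U / ((sl:ℝ) - 1) = B :=
        le_antisymm hle (hvB U hU)
      exact (hbridge U hU).mp
        ((perU hN hR hn hsl C hC D hD U hU).2.mp ((hvBiff U hU).mp heq))
    · intro hw
      obtain ⟨U₁, hU₁, heq₁⟩ := hSne.csSup_mem hSfin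
      rw [heq₁, hsinf U₁ hU₁]
      exact (hvBiff U₁ hU₁).mpr
        ((perU hN hR hn hsl C hC D hD U₁ hU₁).2.mpr ((hbridge U₁ hU₁).mpr (hw.2 U₁ hU₁)))
  constructor
  · rw [hGR, hBeq]
    have := Real.sqrt_le_sqrt hBle
    linarith
  · rw [hGR, hBeq]
    have hiff1 : (R:ℝ) + 1 - Real.sqrt (sSup S) = (R:ℝ) + 1 - Real.sqrt B ↔
        Real.sqrt (sSup S) = Real.sqrt B := by
      constructor <;> intro h <;> linarith
    rw [hiff1, Real.sqrt_inj hsup0 hB0, hchar]
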